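/- Let (X,Y) have the Lancaster density with coefficients ρₙ = λn for 1 ≤ n ≤ N (N ≥ 2) and ρₙ = 0 for n > N, where 0 < λ ≤ (Σ_{n=1}^N n cₙ dₙ)^{-1}. Then R(X,Y) = λN > λ = |ρ(X,Y)| > 0. -/

import Mathlib

open MeasureTheory ProbabilityTheory Real
open scoped ENNReal NNReal

noncomputable def covar {Ω : Type*} [MeasurableSpace Ω] (μ : Measure Ω) (X Y : Ω → ℝ) : ℝ :=
  ∫ ω, (X ω - ∫ a, X a ∂μ) * (Y ω - ∫ a, Y a ∂μ) ∂μ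

noncomputable def pearson {Ω : Type*} [MeasurableSpace Ω] (μ : Measure Ω) (X Y : Ω → ℝ) : ℝ :=
  covar μ X Y / (Real.sqrt (variance X μ) * Real.sqrt (variance Y μ))

noncomputable def maxCorr {Ω : Type*} [MeasurableSpace Ω] (μ : Measure Ω) (X Y : Ω → ℝ) : ℝ :=
  sSup { r : ℝ | ∃ g₁ g₂ : ℝ → ℝ, Measurable g₁ ∧ Measurable g₂ ∧
    MemLp (g₁ ∘ X) 2 μ ∧ MemLp (g₂ ∘ Y) 2 μ ∧
    0 < variance (g₁ ∘ X) μ ∧ 0 < variance (g₂ ∘ Y) μ ∧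
    r = pearson μ (g₁ ∘ X) (g₂ ∘ Y) }

/-- `g` is a probability density on `ℝ` supported in `[a, b]`. -/
def IsDensityOn (g : ℝ → ℝ) (a b : ℝ) : Prop :=
  (∀ x, 0 ≤ g x) ∧ (∀ x, x ∉ Set.Icc a b → g x = 0) ∧ (∫ x, g x = 1)

/-- `φ` is the orthonormal polynomial system of the density `g`:
degree `n`, positive leading coefficients, orthonormal in `L²(g dx)`. -/
def OrthonormalPolys (g : ℝ → ℝ) (φ : ℕ → Polynomial ℝ) : Prop :=
  (∀ n, (φ n).natDegree = n) ∧ (∀ n, 0 < (φ n).leadingCoeff) ∧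
  (∀ m n, ∫ x, (φ m).eval x * (φ n).eval x * g x = if m = n then 1 else 0)

/-- The Lancaster density `f(x,y) = f₁(x) f₂(y) (1 + Σₙ≥₁ ρₙ φₙ(x) ψₙ(y))`. -/
noncomputable def lancaster (f₁ f₂ : ℝ → ℝ) (φ ψ : ℕ → Polynomial ℝ) (ρ : ℕ → ℝ)
    (x y : ℝ) : ℝ :=
  f₁ x * f₂ y * (1 + ∑' n : ℕ, ρ (n + 1) * (φ (n + 1)).eval x * (ψ (n + 1)).eval y)

namespace Stmt19Aux

lemma sum_shift {M : Type*} [AddCommMonoid M] (N : ℕ) (g : ℕ → M) :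
    ∑ n ∈ Finset.range N, g (n + 1) = ∑ k ∈ Finset.Icc 1 N, g k := by
  rw [← Finset.Ico_add_one_right_eq_Icc, Finset.sum_Ico_eq_sum_range]
  simp [add_comm]

lemma dens_integrable {f : ℝ → ℝ} {a b : ℝ} (hf : IsDensityOn f a b) :
    Integrable f volume := by
  by_contra h
  have := hf.2.2
  rw [MeasureTheory.integral_undef h] at this
  norm_num at this

/-- the measure with density `f`. -/
noncomputable def dm (f : ℝ → ℝ) : Measure ℝ :=
  volume.withDensity (fun x => ENNReal.ofReal (f x))

lemma dm_integral {f : ℝ → ℝ} (hm : Measurable f) (h0 : ∀ x, 0 ≤ f x) (g : ℝ → ℝ) :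
    ∫ x, g x ∂(dm f) = ∫ x, g x * f x := by
  have h : dm f = volume.withDensity (fun x => ((f x).toNNReal : ℝ≥0∞)) := rfl
  rw [h, integral_withDensity_eq_integral_smul hm.real_toNNReal]
  congr 1; funext x
  simp [NNReal.smul_def, Real.coe_toNNReal _ (h0 x), mul_comm]

lemma dm_integrable_iff {f : ℝ → ℝ} (hm : Measurable f) (h0 : ∀ x, 0 ≤ f x) (g : ℝ → ℝ) :
    Integrable g (dm f) ↔ Integrable (fun x => g x * f x) volume := by
  rw [dm, integrable_withDensity_iff hm.ennreal_ofReal (ae_of_all _ fun x => ENNReal.ofReal_lt_top)]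
  constructor <;> intro h <;>
    { apply h.congr; filter_upwards with x; rw [ENNReal.toReal_ofReal (h0 x)] }

lemma dm_prob {f : ℝ → ℝ} {a b : ℝ} (hf : IsDensityOn f a b) :
    IsProbabilityMeasure (dm f) := by
  constructor
  rw [dm, withDensity_apply _ MeasurableSet.univ, Measure.restrict_univ,
    ← ofReal_integral_eq_lintegral_ofReal (dens_integrable hf) (ae_of_all _ hf.1), hf.2.2,
    ENNReal.ofReal_one]

lemma dm_ae_mem {f : ℝ → ℝ} {a b : ℝ} (hf : IsDensityOn f a b) :
    ∀ᵐ x ∂(dm f), x ∈ Set.Icc a b := by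
  rw [ae_iff]
  have h : {x | ¬ x ∈ Set.Icc a b} = (Set.Icc a b)ᶜ := rfl
  rw [h, dm, withDensity_apply _ measurableSet_Icc.compl]
  rw [setLIntegral_congr_fun measurableSet_Icc.compl
    (fun x hx => by rw [hf.2.1 x hx, ENNReal.ofReal_zero]), lintegral_zero]

lemma abs_eval_le_sSup (p : Polynomial ℝ) {a b x : ℝ} (hx : x ∈ Set.Icc a b) :
    |p.eval x| ≤ sSup ((fun x => |p.eval x|) '' Set.Icc a b) :=
  le_csSup ((isCompact_Icc.image (by fun_prop)).bddAbove) (Set.mem_image_of_mem _ hx)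

lemma sSup_abs_nonneg (p : Polynomial ℝ) {a b : ℝ} (hab : a ≤ b) :
    0 ≤ sSup ((fun x => |p.eval x|) '' Set.Icc a b) :=
  le_trans (abs_nonneg _) (abs_eval_le_sSup p (Set.mem_Icc.2 ⟨le_refl a, hab⟩))

lemma bessel {ν : Measure ℝ} [IsProbabilityMeasure ν] {s : Finset ℕ} {e : ℕ → ℝ → ℝ}
    (hme : ∀ k, Measurable (e k))
    (C : ℕ → ℝ)
    (hbd : ∀ k ∈ s, ∀ᵐ x ∂ν, |e k x| ≤ C k)
    (horth : ∀ j ∈ s, ∀ k ∈ s, ∫ x, e j x * e k x ∂ν = if j = k then 1 else 0)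
    {u : ℝ → ℝ} (hu : Measurable u) (hu2 : MemLp u 2 ν) :
    ∑ k ∈ s, (∫ x, u x * e k x ∂ν) ^ 2 ≤ ∫ x, u x ^ 2 ∂ν := by
  set a : ℕ → ℝ := fun k => ∫ x, u x * e k x ∂ν with ha
  have huI : Integrable u ν := hu2.integrable one_le_two
  have hIue : ∀ k ∈ s, Integrable (fun x => u x * e k x) ν := by
    intro k hk
    refine Integrable.mono' (huI.abs.const_mul (C k)) (hu.aestronglyMeasurable.mul
      (hme k).aestronglyMeasurable) ?_
    filter_upwards [hbd k hk] with x hx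
    rw [norm_mul, Real.norm_eq_abs, Real.norm_eq_abs]
    exact mul_le_mul_of_nonneg_left hx (abs_nonneg _) |>.trans_eq (mul_comm _ _)
  have hIee : ∀ j ∈ s, ∀ k ∈ s, Integrable (fun x => e j x * e k x) ν := by
    intro j hj k hk
    refine Integrable.mono' (integrable_const (C j * C k)) ((hme j).aestronglyMeasurable.mul
      (hme k).aestronglyMeasurable) ?_
    filter_upwards [hbd j hj, hbd k hk] with x h1 h2
    rw [norm_mul, Real.norm_eq_abs, Real.norm_eq_abs]
    exact mul_le_mul h1 h2 (abs_nonneg _) ((abs_nonneg _).trans h1)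
  set T : ℝ → ℝ := fun x => ∑ k ∈ s, a k * e k x with hT
  have hIuT : Integrable (fun x => u x * T x) ν := by
    have : (fun x => u x * T x) = fun x => ∑ k ∈ s, a k * (u x * e k x) := by
      funext x; rw [hT]; simp only [Finset.mul_sum]; apply Finset.sum_congr rfl; intros; ring
    rw [this]
    exact integrable_finset_sum s (fun k hk => (hIue k hk).const_mul _)
  have hiuT : ∫ x, u x * T x ∂ν = ∑ k ∈ s, (a k) ^ 2 := by
    have h1 : (fun x => u x * T x) = fun x => ∑ k ∈ s, a k * (u x * e k x) := by
      funext x; rw [hT]; simp only [Finset.mul_sum]; apply Finset.sum_congr rfl; intros; ring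
    rw [h1, integral_finset_sum s (fun k hk => (hIue k hk).const_mul _)]
    refine Finset.sum_congr rfl (fun k hk => ?_)
    rw [integral_const_mul, show (∫ x, u x * e k x ∂ν) = a k from rfl, sq]
  have hITT : Integrable (fun x => T x * T x) ν := by
    have h1 : (fun x => T x * T x) =
        fun x => ∑ j ∈ s, ∑ k ∈ s, a j * a k * (e j x * e k x) := by
      funext x; rw [hT, Finset.sum_mul_sum]
      refine Finset.sum_congr rfl (fun j hj => Finset.sum_congr rfl (fun k hk => by ring))
    rw [h1]
    exact integrable_finset_sum s (fun j hj =>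
      integrable_finset_sum s (fun k hk => ((hIee j hj k hk).const_mul _)))
  have hiTT : ∫ x, T x * T x ∂ν = ∑ k ∈ s, (a k) ^ 2 := by
    have h1 : (fun x => T x * T x) =
        fun x => ∑ j ∈ s, ∑ k ∈ s, a j * a k * (e j x * e k x) := by
      funext x; rw [hT, Finset.sum_mul_sum]
      refine Finset.sum_congr rfl (fun j hj => Finset.sum_congr rfl (fun k hk => by ring))
    rw [h1, integral_finset_sum s (fun j hj =>
      integrable_finset_sum s (fun k hk => ((hIee j hj k hk).const_mul _)))]
    have h2 : ∀ j ∈ s, ∫ x, ∑ k ∈ s, a j * a k * (e j x * e k x) ∂ν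
        = ∑ k ∈ s, a j * a k * (if j = k then 1 else 0) := by
      intro j hj
      rw [integral_finset_sum s (fun k hk => ((hIee j hj k hk).const_mul _))]
      exact Finset.sum_congr rfl (fun k hk => by rw [integral_const_mul, horth j hj k hk])
    rw [Finset.sum_congr rfl h2]
    refine Finset.sum_congr rfl (fun j hj => ?_)
    rw [Finset.sum_eq_single j (fun k _ hkj => by simp [Ne.symm hkj]) (fun h => absurd hj h)]
    simp [sq]
  have hIuu : Integrable (fun x => u x ^ 2) ν := hu2.integrable_sq
  have key : 0 ≤ ∫ x, (u x - T x) ^ 2 ∂ν := integral_nonneg (fun x => sq_nonneg _)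
  have I1 : Integrable (fun x => u x ^ 2 + T x * T x) ν := hIuu.add hITT
  have I2 : Integrable (fun x => 2 * (u x * T x)) ν := hIuT.const_mul 2
  have exp : ∫ x, (u x - T x) ^ 2 ∂ν
      = (∫ x, u x ^ 2 ∂ν + ∑ k ∈ s, (a k) ^ 2) - 2 * (∑ k ∈ s, (a k) ^ 2) := by
    have h1 : (fun x => (u x - T x) ^ 2)
        = fun x => (u x ^ 2 + T x * T x) - 2 * (u x * T x) := by
      funext x; ring
    rw [h1, integral_sub I1 I2, integral_add hIuu hITT, integral_const_mul, hiuT, hiTT]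
  rw [exp] at key
  linarith

end Stmt19Aux

open Stmt19Aux

set_option maxHeartbeats 2000000 in
/-- For the Lancaster density with `ρₙ = λ n` for `1 ≤ n ≤ N` (`N ≥ 2`), `ρₙ = 0` for
`n > N`, and `0 < λ ≤ (Σ_{n=1}^N n cₙ dₙ)⁻¹`:
`R(X,Y) = λN > λ = |ρ(X,Y)| > 0`. -/
theorem stmt19 {Ω : Type*} [MeasurableSpace Ω] (μ : Measure Ω) [IsProbabilityMeasure μ]
    (X Y : Ω → ℝ) (hX : Measurable X) (hY : Measurable Y)
    (α₁ ω₁ α₂ ω₂ : ℝ) (h₁ : α₁ < ω₁) (h₂ : α₂ < ω₂)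
    (f₁ f₂ : ℝ → ℝ) (hf₁ : IsDensityOn f₁ α₁ ω₁) (hf₂ : IsDensityOn f₂ α₂ ω₂)
    (hm₁ : Measurable f₁) (hm₂ : Measurable f₂)
    (φ ψ : ℕ → Polynomial ℝ)
    (hφ : OrthonormalPolys f₁ φ) (hψ : OrthonormalPolys f₂ ψ)
    (c d : ℕ → ℝ)
    (hc : ∀ n, c n = sSup ((fun x => |(φ n).eval x|) '' Set.Icc α₁ ω₁))
    (hd : ∀ n, d n = sSup ((fun y => |(ψ n).eval y|) '' Set.Icc α₂ ω₂))
    (N : ℕ) (hN : 2 ≤ N) (lam : ℝ) (hlam : 0 < lam)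
    (hlam' : lam ≤ (∑ n ∈ Finset.Icc 1 N, (n : ℝ) * c n * d n)⁻¹)
    (ρ : ℕ → ℝ) (hρ₁ : ∀ n, 1 ≤ n → n ≤ N → ρ n = lam * n)
    (hρ₂ : ∀ n, N < n → ρ n = 0)
    (hjoint : Measure.map (fun ω => (X ω, Y ω)) μ =
      (volume : Measure (ℝ × ℝ)).withDensity
        (fun p => ENNReal.ofReal (lancaster f₁ f₂ φ ψ ρ p.1 p.2))) :
    maxCorr μ X Y = lam * N ∧
    |pearson μ X Y| = lam ∧
    lam < lam * N ∧ 0 < lam := by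
  classical
  obtain ⟨hf₁0, hf₁supp, hf₁int⟩ := hf₁
  obtain ⟨hf₂0, hf₂supp, hf₂int⟩ := hf₂
  have hf₁' : IsDensityOn f₁ α₁ ω₁ := ⟨hf₁0, hf₁supp, hf₁int⟩
  have hf₂' : IsDensityOn f₂ α₂ ω₂ := ⟨hf₂0, hf₂supp, hf₂int⟩
  obtain ⟨hφdeg, hφlc, hφorth⟩ := hφ
  obtain ⟨hψdeg, hψlc, hψorth⟩ := hψ
  set ν₁ : Measure ℝ := dm f₁ with hν₁
  set ν₂ : Measure ℝ := dm f₂ with hν₂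
  haveI : IsProbabilityMeasure ν₁ := dm_prob hf₁'
  haveI : IsProbabilityMeasure ν₂ := dm_prob hf₂'
  -- sup bounds
  have hcb : ∀ k : ℕ, ∀ x ∈ Set.Icc α₁ ω₁, |Polynomial.eval x (φ k)| ≤ c k := by
    intro k x hx; rw [hc]; exact abs_eval_le_sSup _ hx
  have hdb : ∀ k : ℕ, ∀ y ∈ Set.Icc α₂ ω₂, |Polynomial.eval y (ψ k)| ≤ d k := by
    intro k y hy; rw [hd]; exact abs_eval_le_sSup _ hy
  have hc0 : ∀ k, 0 ≤ c k := fun k => by rw [hc]; exact sSup_abs_nonneg _ h₁.le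
  have hd0 : ∀ k, 0 ≤ d k := fun k => by rw [hd]; exact sSup_abs_nonneg _ h₂.le
  -- zeroth polynomials are ≡ 1
  have heval0₁ : ∀ x, Polynomial.eval x (φ 0) = 1 := by
    have h0 : φ 0 = Polynomial.C ((φ 0).coeff 0) :=
      Polynomial.eq_C_of_natDegree_eq_zero (hφdeg 0)
    have hl : 0 < (φ 0).coeff 0 := by
      have := hφlc 0; rwa [Polynomial.leadingCoeff, hφdeg 0] at this
    have h1 := hφorth 0 0
    rw [if_pos rfl] at h1
    have he : ∀ x, Polynomial.eval x (φ 0) = (φ 0).coeff 0 := fun x => by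
      conv_lhs => rw [h0]
      simp
    have h2 : ∫ x, (φ 0).eval x * (φ 0).eval x * f₁ x
        = (φ 0).coeff 0 * (φ 0).coeff 0 * ∫ x, f₁ x := by
      simp_rw [he, mul_assoc]
      rw [integral_const_mul, integral_const_mul]
    rw [h2, hf₁int, mul_one] at h1
    rcases mul_self_eq_one_iff.mp h1 with h | h
    · intro x; rw [he x, h]
    · exfalso; rw [h] at hl; linarith
  have heval0₂ : ∀ y, Polynomial.eval y (ψ 0) = 1 := by
    have h0 : ψ 0 = Polynomial.C ((ψ 0).coeff 0) :=
      Polynomial.eq_C_of_natDegree_eq_zero (hψdeg 0)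
    have hl : 0 < (ψ 0).coeff 0 := by
      have := hψlc 0; rwa [Polynomial.leadingCoeff, hψdeg 0] at this
    have h1 := hψorth 0 0
    rw [if_pos rfl] at h1
    have he : ∀ y, Polynomial.eval y (ψ 0) = (ψ 0).coeff 0 := fun y => by
      conv_lhs => rw [h0]
      simp
    have h2 : ∫ y, (ψ 0).eval y * (ψ 0).eval y * f₂ y
        = (ψ 0).coeff 0 * (ψ 0).coeff 0 * ∫ y, f₂ y := by
      simp_rw [he, mul_assoc]
      rw [integral_const_mul, integral_const_mul]
    rw [h2, hf₂int, mul_one] at h1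
    rcases mul_self_eq_one_iff.mp h1 with h | h
    · intro y; rw [he y, h]
    · exfalso; rw [h] at hl; linarith
  -- orthonormality with respect to ν₁, ν₂
  have horthν₁ : ∀ m n, ∫ x, Polynomial.eval x (φ m) * Polynomial.eval x (φ n) ∂ν₁
      = if m = n then 1 else 0 := by
    intro m n
    rw [hν₁, dm_integral hm₁ hf₁0]
    exact hφorth m n
  have horthν₂ : ∀ m n, ∫ y, Polynomial.eval y (ψ m) * Polynomial.eval y (ψ n) ∂ν₂
      = if m = n then 1 else 0 := by
    intro m n
    rw [hν₂, dm_integral hm₂ hf₂0]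
    exact hψorth m n
  have hmean0₁ : ∀ n, 1 ≤ n → ∫ x, Polynomial.eval x (φ n) ∂ν₁ = 0 := by
    intro n hn
    have := horthν₁ 0 n
    simp_rw [heval0₁, one_mul] at this
    rwa [if_neg (by omega)] at this
  have hmean0₂ : ∀ n, 1 ≤ n → ∫ y, Polynomial.eval y (ψ n) ∂ν₂ = 0 := by
    intro n hn
    have := horthν₂ 0 n
    simp_rw [heval0₂, one_mul] at this
    rwa [if_neg (by omega)] at this
  -- volume-integral mean-zero facts
  have hφ0v : ∀ k, 1 ≤ k → ∫ x, Polynomial.eval x (φ k) * f₁ x = 0 := by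
    intro k hk
    have := hmean0₁ k hk
    rwa [hν₁, dm_integral hm₁ hf₁0] at this
  have hψ0v : ∀ k, 1 ≤ k → ∫ y, Polynomial.eval y (ψ k) * f₂ y = 0 := by
    intro k hk
    have := hmean0₂ k hk
    rwa [hν₂, dm_integral hm₂ hf₂0] at this
  -- the finite-sum form of the Lancaster density
  have hLeq : ∀ x y, lancaster f₁ f₂ φ ψ ρ x y
      = f₁ x * f₂ y + ∑ k ∈ Finset.Icc 1 N,
          ρ k * (Polynomial.eval x (φ k) * f₁ x) * (Polynomial.eval y (ψ k) * f₂ y) := by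
    intro x y
    rw [lancaster]
    have h1 : ∑' n : ℕ, ρ (n + 1) * (φ (n + 1)).eval x * (ψ (n + 1)).eval y
        = ∑ n ∈ Finset.range N, ρ (n + 1) * (φ (n + 1)).eval x * (ψ (n + 1)).eval y :=
      tsum_eq_sum (fun n hn => by
        rw [hρ₂ (n + 1) (by have := Finset.mem_range.not.mp hn; omega)]; ring)
    rw [h1, sum_shift N (fun k => ρ k * (φ k).eval x * (ψ k).eval y), mul_add, mul_one,
      Finset.mul_sum]
    congr 1
    refine Finset.sum_congr rfl (fun k hk => ?_)
    ring

  -- the sum bound: lam * S ≤ 1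
  have hS0 : (0:ℝ) ≤ ∑ n ∈ Finset.Icc 1 N, (n : ℝ) * c n * d n :=
    Finset.sum_nonneg (fun k _ => mul_nonneg (mul_nonneg (Nat.cast_nonneg k) (hc0 k)) (hd0 k))
  have hlamS : lam * (∑ n ∈ Finset.Icc 1 N, (n : ℝ) * c n * d n) ≤ 1 := by
    rcases eq_or_lt_of_le hS0 with h | h
    · exfalso
      rw [← h] at hlam'
      simp at hlam'
      linarith
    · calc lam * (∑ n ∈ Finset.Icc 1 N, (n : ℝ) * c n * d n)
          ≤ (∑ n ∈ Finset.Icc 1 N, (n : ℝ) * c n * d n)⁻¹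
            * (∑ n ∈ Finset.Icc 1 N, (n : ℝ) * c n * d n) :=
            mul_le_mul_of_nonneg_right hlam' hS0
        _ = 1 := inv_mul_cancel₀ (ne_of_gt h)
  have hρval : ∀ k ∈ Finset.Icc 1 N, ρ k = lam * k := by
    intro k hk
    rw [Finset.mem_Icc] at hk
    exact hρ₁ k hk.1 hk.2
  have hρ0 : ∀ k ∈ Finset.Icc 1 N, 0 ≤ ρ k := by
    intro k hk; rw [hρval k hk]; exact mul_nonneg hlam.le (Nat.cast_nonneg k)
  have hρle : ∀ k ∈ Finset.Icc 1 N, ρ k ≤ lam * N := by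
    intro k hk
    rw [hρval k hk]
    have : (k:ℝ) ≤ N := by exact_mod_cast (Finset.mem_Icc.mp hk).2
    exact mul_le_mul_of_nonneg_left this hlam.le
  -- nonnegativity of the Lancaster density
  have hL0 : ∀ x y, 0 ≤ lancaster f₁ f₂ φ ψ ρ x y := by
    intro x y
    by_cases hx : x ∈ Set.Icc α₁ ω₁
    · by_cases hy : y ∈ Set.Icc α₂ ω₂
      · rw [hLeq x y]
        have hsum : |∑ k ∈ Finset.Icc 1 N,
            ρ k * (Polynomial.eval x (φ k) * f₁ x) * (Polynomial.eval y (ψ k) * f₂ y)|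
            ≤ (lam * ∑ n ∈ Finset.Icc 1 N, (n : ℝ) * c n * d n) * (f₁ x * f₂ y) := by
          calc |∑ k ∈ Finset.Icc 1 N,
              ρ k * (Polynomial.eval x (φ k) * f₁ x) * (Polynomial.eval y (ψ k) * f₂ y)|
              ≤ ∑ k ∈ Finset.Icc 1 N,
                |ρ k * (Polynomial.eval x (φ k) * f₁ x) * (Polynomial.eval y (ψ k) * f₂ y)| :=
              Finset.abs_sum_le_sum_abs _ _
            _ ≤ ∑ k ∈ Finset.Icc 1 N, (lam * k * c k * d k) * (f₁ x * f₂ y) := by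
              refine Finset.sum_le_sum (fun k hk => ?_)
              rw [abs_mul, abs_mul, abs_mul, abs_mul, abs_of_nonneg (hρ0 k hk),
                abs_of_nonneg (hf₁0 x), abs_of_nonneg (hf₂0 y), hρval k hk]
              have h1 := hcb k x hx
              have h2 := hdb k y hy
              have hlk : (0:ℝ) ≤ lam * k := mul_nonneg hlam.le (Nat.cast_nonneg k)
              calc lam * ↑k * (|Polynomial.eval x (φ k)| * f₁ x)
                    * (|Polynomial.eval y (ψ k)| * f₂ y)
                  = (lam * ↑k) * ((|Polynomial.eval x (φ k)| * f₁ x)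
                    * (|Polynomial.eval y (ψ k)| * f₂ y)) := by ring
                _ ≤ (lam * ↑k) * ((c k * f₁ x) * (d k * f₂ y)) := by
                    refine mul_le_mul_of_nonneg_left ?_ hlk
                    exact mul_le_mul (mul_le_mul_of_nonneg_right h1 (hf₁0 x))
                      (mul_le_mul_of_nonneg_right h2 (hf₂0 y))
                      (mul_nonneg (abs_nonneg _) (hf₂0 y))
                      (mul_nonneg (hc0 k) (hf₁0 x))
                _ = lam * ↑k * c k * d k * (f₁ x * f₂ y) := by ring
            _ = (lam * ∑ n ∈ Finset.Icc 1 N, (n : ℝ) * c n * d n) * (f₁ x * f₂ y) := by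
              rw [← Finset.sum_mul]
              congr 1
              rw [Finset.mul_sum]
              exact Finset.sum_congr rfl (fun k hk => by ring)
        have hfxy : 0 ≤ f₁ x * f₂ y := mul_nonneg (hf₁0 x) (hf₂0 y)
        have h2 : (lam * ∑ n ∈ Finset.Icc 1 N, (n : ℝ) * c n * d n) * (f₁ x * f₂ y)
            ≤ f₁ x * f₂ y := by
          nlinarith
        have := neg_abs_le (∑ k ∈ Finset.Icc 1 N,
            ρ k * (Polynomial.eval x (φ k) * f₁ x) * (Polynomial.eval y (ψ k) * f₂ y))
        linarith
      · rw [lancaster, hf₂supp y hy]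
        simp
    · rw [lancaster, hf₁supp x hx]
      simp
  -- measurability of the density
  have hLfun : (fun p : ℝ × ℝ => lancaster f₁ f₂ φ ψ ρ p.1 p.2)
      = fun p : ℝ × ℝ => f₁ p.1 * f₂ p.2 + ∑ k ∈ Finset.Icc 1 N,
          ρ k * (Polynomial.eval p.1 (φ k) * f₁ p.1) * (Polynomial.eval p.2 (ψ k) * f₂ p.2) := by
    funext p; exact hLeq p.1 p.2
  have hLmeas : Measurable (fun p : ℝ × ℝ => lancaster f₁ f₂ φ ψ ρ p.1 p.2) := by
    rw [hLfun]
    refine Measurable.add ((hm₁.comp measurable_fst).mul (hm₂.comp measurable_snd)) ?_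
    refine Finset.measurable_sum _ (fun k hk => ?_)
    exact ((measurable_const.mul (((φ k).continuous.measurable.comp measurable_fst).mul
      (hm₁.comp measurable_fst))).mul
      (((ψ k).continuous.measurable.comp measurable_snd).mul (hm₂.comp measurable_snd)))
  -- integrability of polynomial × density on the line
  have hIφv : ∀ k, Integrable (fun x => Polynomial.eval x (φ k) * f₁ x) volume := by
    intro k
    refine Integrable.mono' ((dens_integrable hf₁').const_mul (c k))
      ((φ k).continuous.measurable.aestronglyMeasurable.mul hm₁.aestronglyMeasurable)
      (ae_of_all _ fun x => ?_)
    rw [norm_mul, Real.norm_eq_abs, Real.norm_eq_abs, abs_of_nonneg (hf₁0 x)]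
    by_cases hx : x ∈ Set.Icc α₁ ω₁
    · exact mul_le_mul_of_nonneg_right (hcb k x hx) (hf₁0 x)
    · rw [hf₁supp x hx]; simp
  have hIψv : ∀ k, Integrable (fun y => Polynomial.eval y (ψ k) * f₂ y) volume := by
    intro k
    refine Integrable.mono' ((dens_integrable hf₂').const_mul (d k))
      ((ψ k).continuous.measurable.aestronglyMeasurable.mul hm₂.aestronglyMeasurable)
      (ae_of_all _ fun y => ?_)
    rw [norm_mul, Real.norm_eq_abs, Real.norm_eq_abs, abs_of_nonneg (hf₂0 y)]
    by_cases hy : y ∈ Set.Icc α₂ ω₂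
    · exact mul_le_mul_of_nonneg_right (hdb k y hy) (hf₂0 y)
    · rw [hf₂supp y hy]; simp
  -- sections of the density are integrable, and their integrals are the marginals
  have hint_y : ∀ x, Integrable (fun y => lancaster f₁ f₂ φ ψ ρ x y) volume := by
    intro x
    have : (fun y => lancaster f₁ f₂ φ ψ ρ x y)
        = fun y => f₁ x * f₂ y + ∑ k ∈ Finset.Icc 1 N,
            (ρ k * (Polynomial.eval x (φ k) * f₁ x)) * (Polynomial.eval y (ψ k) * f₂ y) := by
      funext y; rw [hLeq x y]
    rw [this]
    exact ((dens_integrable hf₂').const_mul (f₁ x)).add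
      (integrable_finset_sum _ (fun k hk => (hIψv k).const_mul _))
  have hint_x : ∀ y, Integrable (fun x => lancaster f₁ f₂ φ ψ ρ x y) volume := by
    intro y
    have : (fun x => lancaster f₁ f₂ φ ψ ρ x y)
        = fun x => f₂ y * f₁ x + ∑ k ∈ Finset.Icc 1 N,
            (ρ k * (Polynomial.eval y (ψ k) * f₂ y)) * (Polynomial.eval x (φ k) * f₁ x) := by
      funext x; rw [hLeq x y]; congr 1
      · ring
      · exact Finset.sum_congr rfl (fun k hk => by ring)
    rw [this]
    exact ((dens_integrable hf₁').const_mul (f₂ y)).add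
      (integrable_finset_sum _ (fun k hk => (hIφv k).const_mul _))
  have hmarg_y : ∀ x, ∫ y, lancaster f₁ f₂ φ ψ ρ x y = f₁ x := by
    intro x
    have h0 : (fun y => lancaster f₁ f₂ φ ψ ρ x y)
        = fun y => f₁ x * f₂ y + ∑ k ∈ Finset.Icc 1 N,
            (ρ k * (Polynomial.eval x (φ k) * f₁ x)) * (Polynomial.eval y (ψ k) * f₂ y) := by
      funext y; rw [hLeq x y]
    rw [h0, integral_add ((dens_integrable hf₂').const_mul (f₁ x))
      (integrable_finset_sum _ (fun k hk => (hIψv k).const_mul _)),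
      integral_finset_sum _ (fun k hk => (hIψv k).const_mul _), integral_const_mul, hf₂int,
      mul_one]
    have : ∀ k ∈ Finset.Icc 1 N,
        ∫ y, (ρ k * (Polynomial.eval x (φ k) * f₁ x)) * (Polynomial.eval y (ψ k) * f₂ y) = 0 := by
      intro k hk
      rw [integral_const_mul, hψ0v k (Finset.mem_Icc.mp hk).1, mul_zero]
    rw [Finset.sum_congr rfl this, Finset.sum_const_zero, add_zero]
  have hmarg_x : ∀ y, ∫ x, lancaster f₁ f₂ φ ψ ρ x y = f₂ y := by
    intro y
    have h0 : (fun x => lancaster f₁ f₂ φ ψ ρ x y)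
        = fun x => f₂ y * f₁ x + ∑ k ∈ Finset.Icc 1 N,
            (ρ k * (Polynomial.eval y (ψ k) * f₂ y)) * (Polynomial.eval x (φ k) * f₁ x) := by
      funext x; rw [hLeq x y]; congr 1
      · ring
      · exact Finset.sum_congr rfl (fun k hk => by ring)
    rw [h0, integral_add ((dens_integrable hf₁').const_mul (f₂ y))
      (integrable_finset_sum _ (fun k hk => (hIφv k).const_mul _)),
      integral_finset_sum _ (fun k hk => (hIφv k).const_mul _), integral_const_mul, hf₁int,
      mul_one]
    have : ∀ k ∈ Finset.Icc 1 N,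
        ∫ x, (ρ k * (Polynomial.eval y (ψ k) * f₂ y)) * (Polynomial.eval x (φ k) * f₁ x) = 0 := by
      intro k hk
      rw [integral_const_mul, hφ0v k (Finset.mem_Icc.mp hk).1, mul_zero]
    rw [Finset.sum_congr rfl this, Finset.sum_const_zero, add_zero]

  -- marginal measures
  have hFmeas : Measurable (fun p : ℝ × ℝ => ENNReal.ofReal (lancaster f₁ f₂ φ ψ ρ p.1 p.2)) :=
    hLmeas.ennreal_ofReal
  have hmargX : Measure.map X μ = ν₁ := by
    have h1 : Measure.map Prod.fst (Measure.map (fun ω => (X ω, Y ω)) μ) = Measure.map X μ := by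
      rw [Measure.map_map measurable_fst (hX.prodMk hY)]
      rfl
    rw [← h1, hjoint]
    ext s hs
    rw [Measure.map_apply measurable_fst hs,
      withDensity_apply _ (hs.preimage measurable_fst), ← Set.prod_univ,
      Measure.volume_eq_prod, ← Measure.prod_restrict, Measure.restrict_univ,
      MeasureTheory.lintegral_prod _ hFmeas.aemeasurable]
    have hin : ∀ x, ∫⁻ y, ENNReal.ofReal (lancaster f₁ f₂ φ ψ ρ x y) ∂volume
        = ENNReal.ofReal (f₁ x) := by
      intro x
      rw [← ofReal_integral_eq_lintegral_ofReal (hint_y x) (ae_of_all _ (fun y => hL0 x y)),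
        hmarg_y x]
    calc ∫⁻ x, ∫⁻ y, ENNReal.ofReal (lancaster f₁ f₂ φ ψ ρ (x, y).1 (x, y).2) ∂volume
          ∂(volume.restrict s)
        = ∫⁻ x, ENNReal.ofReal (f₁ x) ∂(volume.restrict s) := lintegral_congr (fun x => hin x)
      _ = ν₁ s := (withDensity_apply _ hs).symm
  have hmargY : Measure.map Y μ = ν₂ := by
    have h1 : Measure.map Prod.snd (Measure.map (fun ω => (X ω, Y ω)) μ) = Measure.map Y μ := by
      rw [Measure.map_map measurable_snd (hX.prodMk hY)]
      rfl
    rw [← h1, hjoint]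
    ext s hs
    rw [Measure.map_apply measurable_snd hs,
      withDensity_apply _ (hs.preimage measurable_snd), ← Set.univ_prod,
      Measure.volume_eq_prod, ← Measure.prod_restrict, Measure.restrict_univ,
      MeasureTheory.lintegral_prod_symm _ hFmeas.aemeasurable]
    have hin : ∀ y, ∫⁻ x, ENNReal.ofReal (lancaster f₁ f₂ φ ψ ρ x y) ∂volume
        = ENNReal.ofReal (f₂ y) := by
      intro y
      rw [← ofReal_integral_eq_lintegral_ofReal (hint_x y) (ae_of_all _ (fun x => hL0 x y)),
        hmarg_x y]
    calc ∫⁻ y, ∫⁻ x, ENNReal.ofReal (lancaster f₁ f₂ φ ψ ρ (x, y).1 (x, y).2) ∂volume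
          ∂(volume.restrict s)
        = ∫⁻ y, ENNReal.ofReal (f₂ y) ∂(volume.restrict s) := lintegral_congr (fun y => hin y)
      _ = ν₂ s := (withDensity_apply _ hs).symm
  -- a.e. membership upstairs
  have haeX : ∀ᵐ ω ∂μ, X ω ∈ Set.Icc α₁ ω₁ := by
    have := dm_ae_mem hf₁'
    rw [← hν₁, ← hmargX] at this
    exact (ae_map_iff hX.aemeasurable measurableSet_Icc).mp this
  have haeY : ∀ᵐ ω ∂μ, Y ω ∈ Set.Icc α₂ ω₂ := by
    have := dm_ae_mem hf₂'
    rw [← hν₂, ← hmargY] at this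
    exact (ae_map_iff hY.aemeasurable measurableSet_Icc).mp this
  -- transfer of integrals and MemLp
  have hmeanX : ∀ g : ℝ → ℝ, Measurable g → ∫ ω, g (X ω) ∂μ = ∫ x, g x ∂ν₁ := by
    intro g hg
    rw [← hmargX, integral_map hX.aemeasurable hg.aestronglyMeasurable]
  have hmeanY : ∀ g : ℝ → ℝ, Measurable g → ∫ ω, g (Y ω) ∂μ = ∫ y, g y ∂ν₂ := by
    intro g hg
    rw [← hmargY, integral_map hY.aemeasurable hg.aestronglyMeasurable]
  have hMemIffX : ∀ g : ℝ → ℝ, Measurable g → (MemLp (g ∘ X) 2 μ ↔ MemLp g 2 ν₁) := by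
    intro g hg
    rw [← hmargX]
    exact (memLp_map_measure_iff hg.aestronglyMeasurable hX.aemeasurable).symm
  have hMemIffY : ∀ g : ℝ → ℝ, Measurable g → (MemLp (g ∘ Y) 2 μ ↔ MemLp g 2 ν₂) := by
    intro g hg
    rw [← hmargY]
    exact (memLp_map_measure_iff hg.aestronglyMeasurable hY.aemeasurable).symm
  -- the master product-moment formula
  have hstar : ∀ g₁ g₂ : ℝ → ℝ, Measurable g₁ → Measurable g₂ →
      MemLp g₁ 2 ν₁ → MemLp g₂ 2 ν₂ →
      ∫ ω, g₁ (X ω) * g₂ (Y ω) ∂μ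
        = (∫ x, g₁ x ∂ν₁) * (∫ y, g₂ y ∂ν₂)
          + ∑ k ∈ Finset.Icc 1 N, ρ k *
            ((∫ x, g₁ x * Polynomial.eval x (φ k) ∂ν₁)
              * (∫ y, g₂ y * Polynomial.eval y (ψ k) ∂ν₂)) := by
    intro g₁ g₂ hg₁ hg₂ hq₁ hq₂
    have hIg₁ : Integrable g₁ ν₁ := hq₁.integrable one_le_two
    have hIg₂ : Integrable g₂ ν₂ := hq₂.integrable one_le_two
    have hIg₁φ : ∀ k, Integrable (fun x => g₁ x * Polynomial.eval x (φ k)) ν₁ := by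
      intro k
      refine Integrable.mono' (hIg₁.abs.const_mul (c k))
        (hg₁.aestronglyMeasurable.mul (φ k).continuous.measurable.aestronglyMeasurable) ?_
      filter_upwards [dm_ae_mem hf₁'] with x hx
      rw [norm_mul, Real.norm_eq_abs, Real.norm_eq_abs, mul_comm (c k) _]
      exact mul_le_mul_of_nonneg_left (hcb k x hx) (abs_nonneg _)
    have hIg₂ψ : ∀ k, Integrable (fun y => g₂ y * Polynomial.eval y (ψ k)) ν₂ := by
      intro k
      refine Integrable.mono' (hIg₂.abs.const_mul (d k))
        (hg₂.aestronglyMeasurable.mul (ψ k).continuous.measurable.aestronglyMeasurable) ?_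
      filter_upwards [dm_ae_mem hf₂'] with y hy
      rw [norm_mul, Real.norm_eq_abs, Real.norm_eq_abs, mul_comm (d k) _]
      exact mul_le_mul_of_nonneg_left (hdb k y hy) (abs_nonneg _)
    -- move to volume integrals
    have hIg₁v : Integrable (fun x => g₁ x * f₁ x) volume :=
      (dm_integrable_iff hm₁ hf₁0 g₁).mp hIg₁
    have hIg₂v : Integrable (fun y => g₂ y * f₂ y) volume :=
      (dm_integrable_iff hm₂ hf₂0 g₂).mp hIg₂
    have hIg₁φv : ∀ k, Integrable (fun x => g₁ x * Polynomial.eval x (φ k) * f₁ x) volume :=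
      fun k => (dm_integrable_iff hm₁ hf₁0 _).mp (hIg₁φ k)
    have hIg₂ψv : ∀ k, Integrable (fun y => g₂ y * Polynomial.eval y (ψ k) * f₂ y) volume :=
      fun k => (dm_integrable_iff hm₂ hf₂0 _).mp (hIg₂ψ k)
    have e1 : ∫ ω, g₁ (X ω) * g₂ (Y ω) ∂μ
        = ∫ p : ℝ × ℝ, g₁ p.1 * g₂ p.2 ∂(Measure.map (fun ω => (X ω, Y ω)) μ) :=
      (integral_map (hX.prodMk hY).aemeasurable
        ((hg₁.comp measurable_fst).mul (hg₂.comp measurable_snd)).aestronglyMeasurable).symm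
    rw [e1, hjoint]
    have e2 : (volume : Measure (ℝ × ℝ)).withDensity
        (fun p => ENNReal.ofReal (lancaster f₁ f₂ φ ψ ρ p.1 p.2))
        = (volume : Measure (ℝ × ℝ)).withDensity
          (fun p => (((lancaster f₁ f₂ φ ψ ρ p.1 p.2).toNNReal : ℝ≥0) : ℝ≥0∞)) := rfl
    rw [e2, integral_withDensity_eq_integral_smul hLmeas.real_toNNReal]
    have e3 : (fun p : ℝ × ℝ => (lancaster f₁ f₂ φ ψ ρ p.1 p.2).toNNReal • (g₁ p.1 * g₂ p.2))
        = fun p : ℝ × ℝ => (g₁ p.1 * f₁ p.1) * (g₂ p.2 * f₂ p.2)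
          + ∑ k ∈ Finset.Icc 1 N, ρ k *
            ((g₁ p.1 * Polynomial.eval p.1 (φ k) * f₁ p.1)
              * (g₂ p.2 * Polynomial.eval p.2 (ψ k) * f₂ p.2)) := by
      funext p
      rw [NNReal.smul_def, Real.coe_toNNReal _ (hL0 p.1 p.2), smul_eq_mul, hLeq p.1 p.2, add_mul,
        Finset.sum_mul]
      congr 1
      · ring
      · exact Finset.sum_congr rfl (fun k hk => by ring)
    rw [e3, Measure.volume_eq_prod]
    have IA : Integrable (fun p : ℝ × ℝ => (g₁ p.1 * f₁ p.1) * (g₂ p.2 * f₂ p.2))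
        (volume.prod volume) := hIg₁v.mul_prod hIg₂v
    have IB : ∀ k ∈ Finset.Icc 1 N, Integrable (fun p : ℝ × ℝ => ρ k *
        ((g₁ p.1 * Polynomial.eval p.1 (φ k) * f₁ p.1)
          * (g₂ p.2 * Polynomial.eval p.2 (ψ k) * f₂ p.2))) (volume.prod volume) := by
      intro k hk
      have h := (hIg₁φv k).mul_prod (hIg₂ψv k)
      exact h.const_mul (ρ k)
    rw [integral_add IA (integrable_finset_sum _ IB), integral_finset_sum _ IB,
      integral_prod_mul (fun x => g₁ x * f₁ x) (fun y => g₂ y * f₂ y)]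
    congr 1
    · rw [hν₁, hν₂, dm_integral hm₁ hf₁0, dm_integral hm₂ hf₂0]
    · refine Finset.sum_congr rfl (fun k hk => ?_)
      rw [integral_const_mul,
        integral_prod_mul (fun x => g₁ x * Polynomial.eval x (φ k) * f₁ x)
          (fun y => g₂ y * Polynomial.eval y (ψ k) * f₂ y),
        hν₁, hν₂, dm_integral hm₁ hf₁0, dm_integral hm₂ hf₂0]

  -- variance formula
  have hvarX : ∀ g : ℝ → ℝ, Measurable g → MemLp (g ∘ X) 2 μ →
      variance (g ∘ X) μ = ∫ x, (g x - ∫ t, g t ∂ν₁) ^ 2 ∂ν₁ := by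
    intro g hg hp
    have h1 : (∫ a, (g ∘ X) a ∂μ) = ∫ t, g t ∂ν₁ := hmeanX g hg
    rw [variance_eq_integral hp.aestronglyMeasurable.aemeasurable, h1]
    exact hmeanX (fun x => (g x - ∫ t, g t ∂ν₁) ^ 2) ((hg.sub measurable_const).pow_const 2)
  have hvarY : ∀ g : ℝ → ℝ, Measurable g → MemLp (g ∘ Y) 2 μ →
      variance (g ∘ Y) μ = ∫ y, (g y - ∫ t, g t ∂ν₂) ^ 2 ∂ν₂ := by
    intro g hg hp
    have h1 : (∫ a, (g ∘ Y) a ∂μ) = ∫ t, g t ∂ν₂ := hmeanY g hg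
    rw [variance_eq_integral hp.aestronglyMeasurable.aemeasurable, h1]
    exact hmeanY (fun y => (g y - ∫ t, g t ∂ν₂) ^ 2) ((hg.sub measurable_const).pow_const 2)
  -- covariance formula
  have hcovXY : ∀ g₁ g₂ : ℝ → ℝ, Measurable g₁ → Measurable g₂ →
      MemLp (g₁ ∘ X) 2 μ → MemLp (g₂ ∘ Y) 2 μ →
      covar μ (g₁ ∘ X) (g₂ ∘ Y) = ∑ k ∈ Finset.Icc 1 N, ρ k *
        ((∫ x, (g₁ x - ∫ t, g₁ t ∂ν₁) * Polynomial.eval x (φ k) ∂ν₁) *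
          (∫ y, (g₂ y - ∫ t, g₂ t ∂ν₂) * Polynomial.eval y (ψ k) ∂ν₂)) := by
    intro g₁ g₂ hg₁ hg₂ hp₁ hp₂
    have hq₁ : MemLp g₁ 2 ν₁ := (hMemIffX g₁ hg₁).mp hp₁
    have hq₂ : MemLp g₂ 2 ν₂ := (hMemIffY g₂ hg₂).mp hp₂
    have hu : MemLp (fun x => g₁ x - ∫ t, g₁ t ∂ν₁) 2 ν₁ := hq₁.sub (memLp_const _)
    have hv : MemLp (fun y => g₂ y - ∫ t, g₂ t ∂ν₂) 2 ν₂ := hq₂.sub (memLp_const _)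
    have hum : Measurable (fun x => g₁ x - ∫ t, g₁ t ∂ν₁) := hg₁.sub measurable_const
    have hvm : Measurable (fun y => g₂ y - ∫ t, g₂ t ∂ν₂) := hg₂.sub measurable_const
    have hu0 : ∫ x, (g₁ x - ∫ t, g₁ t ∂ν₁) ∂ν₁ = 0 := by
      rw [integral_sub (hq₁.integrable one_le_two) (integrable_const _), integral_const]
      simp
    have hs := hstar _ _ hum hvm hu hv
    rw [hu0, zero_mul, zero_add] at hs
    have h1 : (∫ a, (g₁ ∘ X) a ∂μ) = ∫ t, g₁ t ∂ν₁ := hmeanX g₁ hg₁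
    have h2 : (∫ a, (g₂ ∘ Y) a ∂μ) = ∫ t, g₂ t ∂ν₂ := hmeanY g₂ hg₂
    have h3 : covar μ (g₁ ∘ X) (g₂ ∘ Y)
        = ∫ ω, (g₁ (X ω) - ∫ t, g₁ t ∂ν₁) * (g₂ (Y ω) - ∫ t, g₂ t ∂ν₂) ∂μ := by
      unfold covar
      rw [h1, h2]
      rfl
    rw [h3]
    exact hs
  -- Bessel bound
  have hbesselX : ∀ g : ℝ → ℝ, Measurable g → MemLp g 2 ν₁ →
      ∑ k ∈ Finset.Icc 1 N, (∫ x, g x * Polynomial.eval x (φ k) ∂ν₁) ^ 2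
        ≤ ∫ x, g x ^ 2 ∂ν₁ := by
    intro g hg hq
    exact bessel (e := fun k x => Polynomial.eval x (φ k))
      (fun k => (φ k).continuous.measurable) c
      (fun k _ => by filter_upwards [dm_ae_mem hf₁'] with x hx; exact hcb k x hx)
      (fun j _ k _ => horthν₁ j k) hg hq
  have hbesselY : ∀ g : ℝ → ℝ, Measurable g → MemLp g 2 ν₂ →
      ∑ k ∈ Finset.Icc 1 N, (∫ y, g y * Polynomial.eval y (ψ k) ∂ν₂) ^ 2
        ≤ ∫ y, g y ^ 2 ∂ν₂ := by
    intro g hg hq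
    exact bessel (e := fun k y => Polynomial.eval y (ψ k))
      (fun k => (ψ k).continuous.measurable) d
      (fun k _ => by filter_upwards [dm_ae_mem hf₂'] with y hy; exact hdb k y hy)
      (fun j _ k _ => horthν₂ j k) hg hq
  have hlamN0 : (0:ℝ) ≤ lam * N := mul_nonneg hlam.le (Nat.cast_nonneg N)
  -- upper bound on covariance
  have hub : ∀ g₁ g₂ : ℝ → ℝ, Measurable g₁ → Measurable g₂ →
      MemLp (g₁ ∘ X) 2 μ → MemLp (g₂ ∘ Y) 2 μ →
      covar μ (g₁ ∘ X) (g₂ ∘ Y) ≤ lam * N *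
        (Real.sqrt (variance (g₁ ∘ X) μ) * Real.sqrt (variance (g₂ ∘ Y) μ)) := by
    intro g₁ g₂ hg₁ hg₂ hp₁ hp₂
    have hq₁ : MemLp g₁ 2 ν₁ := (hMemIffX g₁ hg₁).mp hp₁
    have hq₂ : MemLp g₂ 2 ν₂ := (hMemIffY g₂ hg₂).mp hp₂
    have hu : MemLp (fun x => g₁ x - ∫ t, g₁ t ∂ν₁) 2 ν₁ := hq₁.sub (memLp_const _)
    have hv : MemLp (fun y => g₂ y - ∫ t, g₂ t ∂ν₂) 2 ν₂ := hq₂.sub (memLp_const _)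
    have hum : Measurable (fun x => g₁ x - ∫ t, g₁ t ∂ν₁) := hg₁.sub measurable_const
    have hvm : Measurable (fun y => g₂ y - ∫ t, g₂ t ∂ν₂) := hg₂.sub measurable_const
    have hB₁ := hbesselX _ hum hu
    have hB₂ := hbesselY _ hvm hv
    have hv₁ := hvarX g₁ hg₁ hp₁
    have hv₂ := hvarY g₂ hg₂ hp₂
    calc covar μ (g₁ ∘ X) (g₂ ∘ Y)
        = ∑ k ∈ Finset.Icc 1 N, ρ k *
          ((∫ x, (g₁ x - ∫ t, g₁ t ∂ν₁) * Polynomial.eval x (φ k) ∂ν₁) *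
            (∫ y, (g₂ y - ∫ t, g₂ t ∂ν₂) * Polynomial.eval y (ψ k) ∂ν₂)) :=
          hcovXY g₁ g₂ hg₁ hg₂ hp₁ hp₂
      _ ≤ ∑ k ∈ Finset.Icc 1 N, (lam * N) *
          (|∫ x, (g₁ x - ∫ t, g₁ t ∂ν₁) * Polynomial.eval x (φ k) ∂ν₁| *
            |∫ y, (g₂ y - ∫ t, g₂ t ∂ν₂) * Polynomial.eval y (ψ k) ∂ν₂|) := by
          refine Finset.sum_le_sum (fun k hk => ?_)
          have h1 : ρ k * ((∫ x, (g₁ x - ∫ t, g₁ t ∂ν₁) * Polynomial.eval x (φ k) ∂ν₁) *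
              (∫ y, (g₂ y - ∫ t, g₂ t ∂ν₂) * Polynomial.eval y (ψ k) ∂ν₂))
              ≤ ρ k * (|∫ x, (g₁ x - ∫ t, g₁ t ∂ν₁) * Polynomial.eval x (φ k) ∂ν₁| *
                |∫ y, (g₂ y - ∫ t, g₂ t ∂ν₂) * Polynomial.eval y (ψ k) ∂ν₂|) := by
            refine mul_le_mul_of_nonneg_left ?_ (hρ0 k hk)
            rw [← abs_mul]
            exact le_abs_self _
          refine h1.trans ?_
          exact mul_le_mul_of_nonneg_right (hρle k hk)
            (mul_nonneg (abs_nonneg _) (abs_nonneg _))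
      _ = (lam * N) * ∑ k ∈ Finset.Icc 1 N,
          |∫ x, (g₁ x - ∫ t, g₁ t ∂ν₁) * Polynomial.eval x (φ k) ∂ν₁| *
            |∫ y, (g₂ y - ∫ t, g₂ t ∂ν₂) * Polynomial.eval y (ψ k) ∂ν₂| := by
          rw [Finset.mul_sum]
      _ ≤ (lam * N) * (Real.sqrt (∑ k ∈ Finset.Icc 1 N,
            |∫ x, (g₁ x - ∫ t, g₁ t ∂ν₁) * Polynomial.eval x (φ k) ∂ν₁| ^ 2) *
          Real.sqrt (∑ k ∈ Finset.Icc 1 N,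
            |∫ y, (g₂ y - ∫ t, g₂ t ∂ν₂) * Polynomial.eval y (ψ k) ∂ν₂| ^ 2)) :=
          mul_le_mul_of_nonneg_left (Real.sum_mul_le_sqrt_mul_sqrt _ _ _) hlamN0
      _ ≤ lam * N * (Real.sqrt (variance (g₁ ∘ X) μ) * Real.sqrt (variance (g₂ ∘ Y) μ)) := by
          refine mul_le_mul_of_nonneg_left ?_ hlamN0
          simp_rw [sq_abs]
          refine mul_le_mul (Real.sqrt_le_sqrt ?_) (Real.sqrt_le_sqrt ?_)
            (Real.sqrt_nonneg _) (Real.sqrt_nonneg _)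
          · rw [hv₁]; exact hB₁
          · rw [hv₂]; exact hB₂
  -- the maximizing pair (φ_N, ψ_N)
  have hN1 : 1 ≤ N := by omega
  have hNIcc : N ∈ Finset.Icc 1 N := Finset.mem_Icc.mpr ⟨hN1, le_rfl⟩
  have hgNmeas : Measurable (fun x => Polynomial.eval x (φ N)) := (φ N).continuous.measurable
  have hhNmeas : Measurable (fun y => Polynomial.eval y (ψ N)) := (ψ N).continuous.measurable
  have hgNmem : MemLp ((fun x => Polynomial.eval x (φ N)) ∘ X) 2 μ := by
    refine MemLp.of_bound ((hgNmeas.comp hX).aestronglyMeasurable) (c N) ?_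
    filter_upwards [haeX] with ω hω
    simpa [Real.norm_eq_abs] using hcb N _ hω
  have hhNmem : MemLp ((fun y => Polynomial.eval y (ψ N)) ∘ Y) 2 μ := by
    refine MemLp.of_bound ((hhNmeas.comp hY).aestronglyMeasurable) (d N) ?_
    filter_upwards [haeY] with ω hω
    simpa [Real.norm_eq_abs] using hdb N _ hω
  have hvarN₁ : variance ((fun x => Polynomial.eval x (φ N)) ∘ X) μ = 1 := by
    rw [hvarX _ hgNmeas hgNmem, hmean0₁ N hN1]
    simp_rw [sub_zero, pow_two]
    rw [horthν₁ N N, if_pos rfl]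
  have hvarN₂ : variance ((fun y => Polynomial.eval y (ψ N)) ∘ Y) μ = 1 := by
    rw [hvarY _ hhNmeas hhNmem, hmean0₂ N hN1]
    simp_rw [sub_zero, pow_two]
    rw [horthν₂ N N, if_pos rfl]
  have hcovN : covar μ ((fun x => Polynomial.eval x (φ N)) ∘ X)
      ((fun y => Polynomial.eval y (ψ N)) ∘ Y) = lam * N := by
    rw [hcovXY _ _ hgNmeas hhNmeas hgNmem hhNmem, hmean0₁ N hN1, hmean0₂ N hN1]
    simp_rw [sub_zero]
    have hterm : ∀ k ∈ Finset.Icc 1 N, ρ k *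
        ((∫ x, Polynomial.eval x (φ N) * Polynomial.eval x (φ k) ∂ν₁) *
          (∫ y, Polynomial.eval y (ψ N) * Polynomial.eval y (ψ k) ∂ν₂))
        = if N = k then ρ k else 0 := by
      intro k hk
      rw [horthν₁ N k, horthν₂ N k]
      by_cases h : N = k
      · simp [h]
      · simp [h]
    rw [Finset.sum_congr rfl hterm, Finset.sum_ite_eq _ N _, if_pos hNIcc,
      hρ₁ N hN1 le_rfl]
  have hpearsonN : pearson μ ((fun x => Polynomial.eval x (φ N)) ∘ X)
      ((fun y => Polynomial.eval y (ψ N)) ∘ Y) = lam * N := by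
    rw [pearson, hcovN, hvarN₁, hvarN₂, Real.sqrt_one]
    norm_num
  -- computing the sSup
  have hmemS : (lam * N : ℝ) ∈ { r : ℝ | ∃ g₁ g₂ : ℝ → ℝ, Measurable g₁ ∧ Measurable g₂ ∧
      MemLp (g₁ ∘ X) 2 μ ∧ MemLp (g₂ ∘ Y) 2 μ ∧
      0 < variance (g₁ ∘ X) μ ∧ 0 < variance (g₂ ∘ Y) μ ∧
      r = pearson μ (g₁ ∘ X) (g₂ ∘ Y) } := by
    refine ⟨fun x => Polynomial.eval x (φ N), fun y => Polynomial.eval y (ψ N),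
      hgNmeas, hhNmeas, hgNmem, hhNmem, ?_, ?_, hpearsonN.symm⟩
    · rw [hvarN₁]; norm_num
    · rw [hvarN₂]; norm_num
  have hubS : ∀ r ∈ { r : ℝ | ∃ g₁ g₂ : ℝ → ℝ, Measurable g₁ ∧ Measurable g₂ ∧
      MemLp (g₁ ∘ X) 2 μ ∧ MemLp (g₂ ∘ Y) 2 μ ∧
      0 < variance (g₁ ∘ X) μ ∧ 0 < variance (g₂ ∘ Y) μ ∧
      r = pearson μ (g₁ ∘ X) (g₂ ∘ Y) }, r ≤ lam * N := by
    rintro r ⟨g₁, g₂, hg₁, hg₂, hp₁, hp₂, hpv₁, hpv₂, rfl⟩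
    have hden : 0 < Real.sqrt (variance (g₁ ∘ X) μ) * Real.sqrt (variance (g₂ ∘ Y) μ) :=
      mul_pos (Real.sqrt_pos.mpr hpv₁) (Real.sqrt_pos.mpr hpv₂)
    rw [pearson, div_le_iff₀ hden]
    exact hub g₁ g₂ hg₁ hg₂ hp₁ hp₂
  have hmax : maxCorr μ X Y = lam * N := by
    rw [maxCorr]
    exact le_antisymm (csSup_le ⟨lam * N, hmemS⟩ hubS) (le_csSup ⟨lam * N, hubS⟩ hmemS)

  -- pearson of X and Y themselves, via the degree-one polynomials
  have hXbd : ∀ᵐ ω ∂μ, ‖X ω‖ ≤ max |α₁| |ω₁| := by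
    filter_upwards [haeX] with ω hω
    rw [Real.norm_eq_abs]
    rcases Set.mem_Icc.mp hω with ⟨hl, hr⟩
    rw [abs_le]
    constructor
    · calc -(max |α₁| |ω₁|) ≤ -|α₁| := by simp [le_max_left]
        _ ≤ α₁ := neg_abs_le α₁
        _ ≤ X ω := hl
    · calc X ω ≤ ω₁ := hr
        _ ≤ |ω₁| := le_abs_self ω₁
        _ ≤ max |α₁| |ω₁| := le_max_right _ _
  have hYbd : ∀ᵐ ω ∂μ, ‖Y ω‖ ≤ max |α₂| |ω₂| := by
    filter_upwards [haeY] with ω hω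
    rw [Real.norm_eq_abs]
    rcases Set.mem_Icc.mp hω with ⟨hl, hr⟩
    rw [abs_le]
    constructor
    · calc -(max |α₂| |ω₂|) ≤ -|α₂| := by simp [le_max_left]
        _ ≤ α₂ := neg_abs_le α₂
        _ ≤ Y ω := hl
    · calc Y ω ≤ ω₂ := hr
        _ ≤ |ω₂| := le_abs_self ω₂
        _ ≤ max |α₂| |ω₂| := le_max_right _ _
  have hXmem : MemLp ((fun x : ℝ => x) ∘ X) 2 μ :=
    MemLp.of_bound hX.aestronglyMeasurable (max |α₁| |ω₁|) hXbd
  have hYmem : MemLp ((fun y : ℝ => y) ∘ Y) 2 μ :=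
    MemLp.of_bound hY.aestronglyMeasurable (max |α₂| |ω₂|) hYbd
  -- degree-one structure
  have ht₁ : 0 < (φ 1).coeff 1 := by
    have := hφlc 1; rwa [Polynomial.leadingCoeff, hφdeg 1] at this
  have ht₂ : 0 < (ψ 1).coeff 1 := by
    have := hψlc 1; rwa [Polynomial.leadingCoeff, hψdeg 1] at this
  have heval1₁ : ∀ x : ℝ, Polynomial.eval x (φ 1) = (φ 1).coeff 0 + (φ 1).coeff 1 * x := by
    intro x
    rw [Polynomial.eval_eq_sum_range, hφdeg 1]
    simp [Finset.sum_range_succ]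
  have heval1₂ : ∀ y : ℝ, Polynomial.eval y (ψ 1) = (ψ 1).coeff 0 + (ψ 1).coeff 1 * y := by
    intro y
    rw [Polynomial.eval_eq_sum_range, hψdeg 1]
    simp [Finset.sum_range_succ]
  have hIid₁ : Integrable (fun x : ℝ => x) ν₁ := by
    refine Integrable.mono' (integrable_const (max |α₁| |ω₁|))
      measurable_id.aestronglyMeasurable ?_
    filter_upwards [dm_ae_mem hf₁'] with x hx
    rcases Set.mem_Icc.mp hx with ⟨hl, hr⟩
    rw [Real.norm_eq_abs, abs_le]
    exact ⟨by calc -(max |α₁| |ω₁|) ≤ -|α₁| := by simp [le_max_left]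
        _ ≤ α₁ := neg_abs_le α₁
        _ ≤ x := hl,
      by calc x ≤ ω₁ := hr
        _ ≤ |ω₁| := le_abs_self ω₁
        _ ≤ max |α₁| |ω₁| := le_max_right _ _⟩
  have hIid₂ : Integrable (fun y : ℝ => y) ν₂ := by
    refine Integrable.mono' (integrable_const (max |α₂| |ω₂|))
      measurable_id.aestronglyMeasurable ?_
    filter_upwards [dm_ae_mem hf₂'] with y hy
    rcases Set.mem_Icc.mp hy with ⟨hl, hr⟩
    rw [Real.norm_eq_abs, abs_le]
    exact ⟨by calc -(max |α₂| |ω₂|) ≤ -|α₂| := by simp [le_max_left]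
        _ ≤ α₂ := neg_abs_le α₂
        _ ≤ y := hl,
      by calc y ≤ ω₂ := hr
        _ ≤ |ω₂| := le_abs_self ω₂
        _ ≤ max |α₂| |ω₂| := le_max_right _ _⟩
  have hz₁ : (φ 1).coeff 0 + (φ 1).coeff 1 * (∫ x, x ∂ν₁) = 0 := by
    have h := hmean0₁ 1 le_rfl
    have h2 : ∫ x, Polynomial.eval x (φ 1) ∂ν₁
        = (φ 1).coeff 0 + (φ 1).coeff 1 * ∫ x, x ∂ν₁ := by
      have e : (fun x => Polynomial.eval x (φ 1))
          = fun x : ℝ => (φ 1).coeff 0 + (φ 1).coeff 1 * x := funext heval1₁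
      rw [e, integral_add (integrable_const _) (hIid₁.const_mul _), integral_const,
        integral_const_mul]
      simp
    rw [h2] at h
    exact h
  have hz₂ : (ψ 1).coeff 0 + (ψ 1).coeff 1 * (∫ y, y ∂ν₂) = 0 := by
    have h := hmean0₂ 1 le_rfl
    have h2 : ∫ y, Polynomial.eval y (ψ 1) ∂ν₂
        = (ψ 1).coeff 0 + (ψ 1).coeff 1 * ∫ y, y ∂ν₂ := by
      have e : (fun y => Polynomial.eval y (ψ 1))
          = fun y : ℝ => (ψ 1).coeff 0 + (ψ 1).coeff 1 * y := funext heval1₂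
      rw [e, integral_add (integrable_const _) (hIid₂.const_mul _), integral_const,
        integral_const_mul]
      simp
    rw [h2] at h
    exact h
  have hsub₁ : ∀ x : ℝ, x - (∫ t : ℝ, t ∂ν₁) = Polynomial.eval x (φ 1) / (φ 1).coeff 1 := by
    intro x
    rw [heval1₁, show (φ 1).coeff 0 = -((φ 1).coeff 1 * ∫ t : ℝ, t ∂ν₁) by linarith [hz₁]]
    field_simp
    ring
  have hsub₂ : ∀ y : ℝ, y - (∫ t : ℝ, t ∂ν₂) = Polynomial.eval y (ψ 1) / (ψ 1).coeff 1 := by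
    intro y
    rw [heval1₂, show (ψ 1).coeff 0 = -((ψ 1).coeff 1 * ∫ t : ℝ, t ∂ν₂) by linarith [hz₂]]
    field_simp
    ring
  -- variance of X and Y
  have hsq₁ : ∫ x, Polynomial.eval x (φ 1) ^ 2 ∂ν₁ = 1 := by
    simp_rw [pow_two]
    rw [horthν₁ 1 1, if_pos rfl]
  have hsq₂ : ∫ y, Polynomial.eval y (ψ 1) ^ 2 ∂ν₂ = 1 := by
    simp_rw [pow_two]
    rw [horthν₂ 1 1, if_pos rfl]
  have hvX : variance X μ = 1 / (φ 1).coeff 1 ^ 2 := by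
    have h := hvarX (fun x : ℝ => x) measurable_id hXmem
    have h2 : ∫ x, (x - ∫ t : ℝ, t ∂ν₁) ^ 2 ∂ν₁
        = ∫ x, Polynomial.eval x (φ 1) ^ 2 / (φ 1).coeff 1 ^ 2 ∂ν₁ := by
      refine integral_congr_ae (ae_of_all _ fun x => ?_)
      beta_reduce
      rw [hsub₁ x, div_pow]
    rw [h2, integral_div, hsq₁] at h
    exact h
  have hvY : variance Y μ = 1 / (ψ 1).coeff 1 ^ 2 := by
    have h := hvarY (fun y : ℝ => y) measurable_id hYmem
    have h2 : ∫ y, (y - ∫ t : ℝ, t ∂ν₂) ^ 2 ∂ν₂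
        = ∫ y, Polynomial.eval y (ψ 1) ^ 2 / (ψ 1).coeff 1 ^ 2 ∂ν₂ := by
      refine integral_congr_ae (ae_of_all _ fun y => ?_)
      beta_reduce
      rw [hsub₂ y, div_pow]
    rw [h2, integral_div, hsq₂] at h
    exact h
  -- covariance of X and Y
  have h1Icc : (1 : ℕ) ∈ Finset.Icc 1 N := Finset.mem_Icc.mpr ⟨le_rfl, by omega⟩
  have hg1meas : Measurable (fun x => Polynomial.eval x (φ 1)) := (φ 1).continuous.measurable
  have hh1meas : Measurable (fun y => Polynomial.eval y (ψ 1)) := (ψ 1).continuous.measurable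
  have hg1mem : MemLp (fun x => Polynomial.eval x (φ 1)) 2 ν₁ := by
    refine MemLp.of_bound hg1meas.aestronglyMeasurable (c 1) ?_
    filter_upwards [dm_ae_mem hf₁'] with x hx
    simpa [Real.norm_eq_abs] using hcb 1 x hx
  have hh1mem : MemLp (fun y => Polynomial.eval y (ψ 1)) 2 ν₂ := by
    refine MemLp.of_bound hh1meas.aestronglyMeasurable (d 1) ?_
    filter_upwards [dm_ae_mem hf₂'] with y hy
    simpa [Real.norm_eq_abs] using hdb 1 y hy
  have hEprod : ∫ ω, Polynomial.eval (X ω) (φ 1) * Polynomial.eval (Y ω) (ψ 1) ∂μ = ρ 1 := by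
    rw [hstar _ _ hg1meas hh1meas hg1mem hh1mem, hmean0₁ 1 le_rfl, hmean0₂ 1 le_rfl]
    have hterm : ∀ k ∈ Finset.Icc 1 N, ρ k *
        ((∫ x, Polynomial.eval x (φ 1) * Polynomial.eval x (φ k) ∂ν₁) *
          (∫ y, Polynomial.eval y (ψ 1) * Polynomial.eval y (ψ k) ∂ν₂))
        = if (1 : ℕ) = k then ρ k else 0 := by
      intro k hk
      rw [horthν₁ 1 k, horthν₂ 1 k]
      by_cases h : (1 : ℕ) = k
      · simp [h]
      · simp [h]
    rw [Finset.sum_congr rfl hterm, Finset.sum_ite_eq _ 1 _, if_pos h1Icc]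
    ring
  have hcvXY : covar μ X Y = (1 / ((φ 1).coeff 1 * (ψ 1).coeff 1)) * ρ 1 := by
    have h0 : covar μ X Y
        = ∫ ω, (X ω - ∫ x, x ∂ν₁) * (Y ω - ∫ y, y ∂ν₂) ∂μ := by
      unfold covar
      have e1 : (∫ a, X a ∂μ) = ∫ x, x ∂ν₁ := hmeanX (fun x : ℝ => x) measurable_id
      have e2 : (∫ a, Y a ∂μ) = ∫ y, y ∂ν₂ := hmeanY (fun y : ℝ => y) measurable_id
      rw [e1, e2]
    rw [h0]
    have h2 : ∫ ω, (X ω - ∫ x, x ∂ν₁) * (Y ω - ∫ y, y ∂ν₂) ∂μ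
        = ∫ ω, (1 / ((φ 1).coeff 1 * (ψ 1).coeff 1)) *
            (Polynomial.eval (X ω) (φ 1) * Polynomial.eval (Y ω) (ψ 1)) ∂μ := by
      refine integral_congr_ae (ae_of_all _ fun ω => ?_)
      beta_reduce
      rw [hsub₁ (X ω), hsub₂ (Y ω)]
      field_simp
    rw [h2, integral_const_mul, hEprod]
  have hρ1 : ρ 1 = lam := by
    rw [hρ₁ 1 le_rfl (by omega)]
    simp
  have hsqrtX : Real.sqrt (variance X μ) = 1 / (φ 1).coeff 1 := by
    rw [hvX, show (1 : ℝ) / (φ 1).coeff 1 ^ 2 = (1 / (φ 1).coeff 1) ^ 2 by ring]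
    exact Real.sqrt_sq (by positivity)
  have hsqrtY : Real.sqrt (variance Y μ) = 1 / (ψ 1).coeff 1 := by
    rw [hvY, show (1 : ℝ) / (ψ 1).coeff 1 ^ 2 = (1 / (ψ 1).coeff 1) ^ 2 by ring]
    exact Real.sqrt_sq (by positivity)
  have hpXY : pearson μ X Y = lam := by
    rw [pearson, hcvXY, hρ1, hsqrtX, hsqrtY]
    field_simp
  refine ⟨hmax, ?_, ?_, hlam⟩
  · rw [hpXY]
    exact abs_of_pos hlam
  · have h1N : (1 : ℝ) < N := by exact_mod_cast (by omega : 1 < N)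
    nlinarith
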